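/- Let (a_t) be positive with a_{t+1} ≥ a_t (1 - C η̃_t) where C > 0 and η̃_t ≥ 0 satisfies η̃_t ≤ 1/(4Ct) for all t ≥ t₀. Then t · a_t → ∞ as t → ∞; in particular a_t = ω(1/t). -/

import Mathlib

open Filter

/-- If a positive sequence satisfies `a (t+1) ≥ a t (1 - C η̃ t)` with
`0 ≤ η̃ t ≤ 1/(4Ct)` for `t ≥ t₀`, then `t · a t → ∞`, i.e. `a t = ω(1/t)`. -/
theorem weight_norm_lower (a η : ℕ → ℝ) (C : ℝ) (hC : 0 < C) (t₀ : ℕ)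
    (ht₀ : 1 ≤ t₀) (hpos : ∀ t, 0 < a t) (hη : ∀ t, 0 ≤ η t)
    (hηsmall : ∀ t : ℕ, t₀ ≤ t → η t ≤ 1 / (4 * C * (t : ℝ)))
    (hrec : ∀ t : ℕ, t₀ ≤ t → a t * (1 - C * η t) ≤ a (t + 1)) :
    Tendsto (fun t : ℕ => (t : ℝ) * a t) atTop atTop := by
  set c : ℝ := (t₀ : ℝ) * a t₀ / Real.sqrt t₀ with hc
  have ht₀pos : (0:ℝ) < t₀ := by exact_mod_cast ht₀
  have hcpos : 0 < c := by
    apply div_pos (mul_pos ht₀pos (hpos t₀)) (Real.sqrt_pos.mpr ht₀pos)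
  have key : ∀ t : ℕ, t₀ ≤ t → c * Real.sqrt t ≤ (t : ℝ) * a t := by
    intro t ht
    induction t, ht using Nat.le_induction with
    | base =>
      rw [hc, div_mul_cancel₀]
      exact ne_of_gt (Real.sqrt_pos.mpr ht₀pos)
    | succ t ht ih =>
      have htpos : (0:ℝ) < t := lt_of_lt_of_le ht₀pos (by exact_mod_cast ht)
      -- step 1: r_{t+1} ≥ r_t * (1 + 1/(2t))
      have hCη : C * η t ≤ 1 / (4 * (t:ℝ)) := by
        have := hηsmall t ht
        calc C * η t ≤ C * (1 / (4 * C * t)) := by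
              exact mul_le_mul_of_nonneg_left this (le_of_lt hC)
          _ = 1 / (4 * t) := by field_simp
      have ha1 : a t * (1 - 1 / (4 * (t:ℝ))) ≤ a (t + 1) := by
        refine le_trans ?_ (hrec t ht)
        exact mul_le_mul_of_nonneg_left (by linarith) (le_of_lt (hpos t))
      have hstep : (t : ℝ) * a t * (1 + 1 / (2 * t)) ≤ ((t + 1 : ℕ) : ℝ) * a (t + 1) := by
        push_cast
        have h1 : ((t:ℝ) + 1) * (a t * (1 - 1 / (4 * (t:ℝ)))) ≤ ((t:ℝ) + 1) * a (t + 1) :=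
          mul_le_mul_of_nonneg_left ha1 (by positivity)
        refine le_trans ?_ h1
        have ht1 : (1:ℝ) ≤ t := by exact_mod_cast le_trans ht₀ ht
        have e2 : (t:ℝ) * (1/(2*(t:ℝ))) = 1/2 := by field_simp
        have e4 : (t:ℝ) * (1/(4*(t:ℝ))) = 1/4 := by field_simp
        have h4 : (1:ℝ)/(4*(t:ℝ)) ≤ 1/4 := by
          rw [div_le_div_iff₀ (by positivity) (by norm_num)]
          linarith
        nlinarith [e2, e4, h4, hpos t, ht1]
      -- step 2: c * √(t+1) ≤ c * √t * (1 + 1/(2t))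
      have hsq : Real.sqrt ((t:ℝ) + 1) ≤ Real.sqrt t * (1 + 1 / (2 * t)) := by
        rw [show Real.sqrt t * (1 + 1 / (2 * t))
            = Real.sqrt t * |1 + 1 / (2 * (t:ℝ))| by
              rw [abs_of_pos (by positivity)]]
        rw [← Real.sqrt_sq_eq_abs, ← Real.sqrt_mul htpos.le]
        apply Real.sqrt_le_sqrt
        field_simp
        nlinarith [htpos]
      calc c * Real.sqrt ((t + 1 : ℕ) : ℝ)
          ≤ c * (Real.sqrt t * (1 + 1 / (2 * t))) := by
            push_cast
            exact mul_le_mul_of_nonneg_left hsq hcpos.le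
        _ = c * Real.sqrt t * (1 + 1 / (2 * t)) := by ring
        _ ≤ (t : ℝ) * a t * (1 + 1 / (2 * t)) :=
            mul_le_mul_of_nonneg_right ih (by positivity)
        _ ≤ ((t + 1 : ℕ) : ℝ) * a (t + 1) := hstep
  have hlim : Tendsto (fun t : ℕ => c * Real.sqrt t) atTop atTop := by
    apply Tendsto.const_mul_atTop hcpos
    have h := (tendsto_rpow_atTop (by norm_num : (0:ℝ) < 1/2)).comp
      tendsto_natCast_atTop_atTop
    exact h.congr fun t => (Real.sqrt_eq_rpow (t:ℝ)).symm
  refine tendsto_atTop_mono' atTop ?_ hlim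
  filter_upwards [eventually_ge_atTop t₀] with t ht using key t ht
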